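/- arXiv:1111.6283 — 2 statements merged into one kernel-verified Lean document; each statement's English description precedes it below -/
import Mathlib

section
/- Let $p_t, p_u, q \geq 1$ and let $\omega_{ij} \in \mathbb{R}$ for $1 \leq i \leq p_t$, $1 \leq j \leq q$. Let $T$ be a random $(p_t + p_u) \times q$ real matrix whose entries are jointly independent, with $T_{ij}$ distributed as a real Gaussian with mean $\omega_{ij}$ and variance $1$ for $i \leq p_t$, and as a standard real Gaussian (mean $0$, variance $1$) for $i > p_t$. For $c \in \mathbb{R}$ and $x \geq 0$ let $F_c(x)$ denote the probability that $Z^2 \leq x$ where $Z$ is Gaussian with mean $c$ and variance $1$, and write $F(x) = F_0(x)$. Then the probability that $\max_{i > p_t,\, j} T_{ij}^2 < \max_{i \leq p_t,\, j} T_{ij}^2$ equals $\int_0^\infty p_u q\, F(x)^{p_u q - 1} \frac{e^{-x/2}}{\sqrt{2\pi x}} \Big(1 - \prod_{i=1}^{p_t} \prod_{j=1}^{q} F_{\omega_{ij}}(x)\Big)\, dx$, the integral being with respect to Lebesgue measure on $(0,\infty)$. -/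
open MeasureTheory ProbabilityTheory Real Set

noncomputable def Fc (c : ℝ) (x : ℝ) : ℝ := (gaussianReal c 1 {y : ℝ | y ^ 2 ≤ x}).toReal

noncomputable def chi1 (x : ℝ) : ℝ := Real.exp (-x / 2) / Real.sqrt (2 * Real.pi * x)

noncomputable def Gg (s : ℝ) : ℝ := ∫ t in (-s)..s, gaussianPDFReal 0 1 t

noncomputable def rhoN (n : ℕ) (x : ℝ) : ℝ := n * Fc 0 x ^ (n - 1) * chi1 x




lemma Fc_nonneg (c x : ℝ) : 0 ≤ Fc c x := ENNReal.toReal_nonneg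

lemma Fc_le_one (c x : ℝ) : Fc c x ≤ 1 := by
  unfold Fc
  rw [show (1:ℝ) = (1:ENNReal).toReal by simp]
  exact ENNReal.toReal_mono (by simp) (prob_le_one)

lemma Fc_mono (c : ℝ) : Monotone (Fc c) := by
  intro a b hab
  exact ENNReal.toReal_mono (measure_ne_top _ _)
    (measure_mono (fun y hy => le_trans hy hab))

lemma Fc_measurable (c : ℝ) : Measurable (Fc c) := (Fc_mono c).measurable

lemma sq_set_eq {x : ℝ} (hx : 0 ≤ x) :
    {y : ℝ | y ^ 2 ≤ x} = Set.Icc (-Real.sqrt x) (Real.sqrt x) := by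
  ext y; simpa [Set.mem_Icc] using Real.sq_le hx

lemma Fc_neg {c x : ℝ} (hx : x < 0) : Fc c x = 0 := by
  have : {y : ℝ | y ^ 2 ≤ x} = ∅ := by
    ext y; simp only [Set.mem_setOf_eq, Set.mem_empty_iff_false, iff_false, not_le]
    exact lt_of_lt_of_le hx (sq_nonneg y)
  simp [Fc, this]

lemma chi1_nonneg (x : ℝ) : 0 ≤ chi1 x :=
  div_nonneg (Real.exp_nonneg _) (Real.sqrt_nonneg _)

lemma chi1_measurable : Measurable chi1 := by
  unfold chi1; fun_prop

lemma gaussPDF_even (s : ℝ) : gaussianPDFReal 0 1 (-s) = gaussianPDFReal 0 1 s := by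
  simp [gaussianPDFReal, neg_sq]

lemma gaussPDF_cont : Continuous (gaussianPDFReal 0 1) := by
  rw [gaussianPDFReal_def]; fun_prop




lemma hasDerivAt_Hh (s : ℝ) :
    HasDerivAt (fun u => ∫ t in (0:ℝ)..u, gaussianPDFReal 0 1 t) (gaussianPDFReal 0 1 s) s :=
  intervalIntegral.integral_hasDerivAt_right (gaussPDF_cont.intervalIntegrable _ _)
    gaussPDF_cont.stronglyMeasurable.stronglyMeasurableAtFilter gaussPDF_cont.continuousAt

lemma Gg_eq (s : ℝ) : Gg s = (∫ t in (0:ℝ)..s, gaussianPDFReal 0 1 t)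
    - ∫ t in (0:ℝ)..(-s), gaussianPDFReal 0 1 t := by
  unfold Gg
  rw [← intervalIntegral.integral_add_adjacent_intervals (a := -s) (b := 0) (c := s)
    (gaussPDF_cont.intervalIntegrable _ _) (gaussPDF_cont.intervalIntegrable _ _),
    intervalIntegral.integral_symm]
  ring

lemma hasDerivAt_Gg (s : ℝ) : HasDerivAt Gg (2 * gaussianPDFReal 0 1 s) s := by
  have h1 := hasDerivAt_Hh s
  have h2 : HasDerivAt (fun u : ℝ => ∫ t in (0:ℝ)..(-u), gaussianPDFReal 0 1 t)
      (-(gaussianPDFReal 0 1 (-s))) s := by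
    have := (hasDerivAt_Hh (-s)).comp s (hasDerivAt_neg s)
    simp only [mul_neg, mul_one] at this
    exact this
  have h3 := h1.sub h2
  have : Gg = fun s => (∫ t in (0:ℝ)..s, gaussianPDFReal 0 1 t)
      - ∫ t in (0:ℝ)..(-s), gaussianPDFReal 0 1 t := funext Gg_eq
  rw [this]
  refine h3.congr_deriv ?_
  rw [gaussPDF_even]; ring

lemma continuous_Gg : Continuous Gg := by
  rw [continuous_iff_continuousAt]
  exact fun s => (hasDerivAt_Gg s).continuousAt

lemma Fc_eq_Gg {x : ℝ} (hx : 0 ≤ x) : Fc 0 x = Gg (Real.sqrt x) := by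
  have h : -Real.sqrt x ≤ Real.sqrt x := le_trans (neg_nonpos.2 (Real.sqrt_nonneg x)) (Real.sqrt_nonneg x)
  rw [Fc, sq_set_eq hx, gaussianReal_apply_eq_integral _ one_ne_zero,
    ENNReal.toReal_ofReal (setIntegral_nonneg measurableSet_Icc
      (fun t _ => gaussianPDFReal_nonneg _ _ _)), Gg,
    intervalIntegral.integral_of_le h, integral_Icc_eq_integral_Ioc]

lemma gaussPDF_sqrt {x : ℝ} (hx : 0 < x) :
    gaussianPDFReal 0 1 (Real.sqrt x) = Real.exp (-x / 2) / Real.sqrt (2 * Real.pi) := by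
  rw [gaussianPDFReal]
  rw [sub_zero, Real.sq_sqrt hx.le]
  push_cast
  rw [mul_one, mul_one, inv_eq_one_div, neg_div]
  ring

lemma continuousOn_Fc0 : ContinuousOn (Fc 0) (Set.Ici 0) :=
  ((continuous_Gg.comp Real.continuous_sqrt).continuousOn).congr
    (fun x hx => Fc_eq_Gg hx)

lemma Fc0_zero : Fc 0 0 = 0 := by
  have hset : {y : ℝ | y ^ 2 ≤ 0} = {(0:ℝ)} := by
    ext y
    simp only [Set.mem_setOf_eq, Set.mem_singleton_iff]
    constructor
    · intro h
      have := sq_nonneg y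
      have h0 : y ^ 2 = 0 := le_antisymm h this
      exact (pow_eq_zero_iff two_ne_zero).mp h0
    · rintro rfl; simp
  rw [Fc, hset]
  have h0 : gaussianReal 0 1 {(0:ℝ)} = 0 := by
    rw [gaussianReal_apply 0 one_ne_zero]
    have : (volume : Measure ℝ).restrict {(0:ℝ)} = 0 :=
      Measure.restrict_eq_zero.2 (by simp)
    rw [this, lintegral_zero_measure]
  rw [h0]
  simp

lemma hasDerivAt_Fc0 {x : ℝ} (hx : 0 < x) : HasDerivAt (Fc 0) (chi1 x) x := by
  have hs : Real.sqrt x ≠ 0 := (Real.sqrt_pos.2 hx).ne'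
  have h := (hasDerivAt_Gg (Real.sqrt x)).comp x (Real.hasDerivAt_sqrt hx.ne')
  have heq : Fc 0 =ᶠ[nhds x] (Gg ∘ Real.sqrt) := by
    filter_upwards [eventually_nhds_iff.2 ⟨Set.Ioi 0, fun y hy => Fc_eq_Gg (le_of_lt hy),
      isOpen_Ioi, hx⟩] with y hy
    exact hy
  refine HasDerivAt.congr_of_eventuallyEq ?_ heq
  refine h.congr_deriv ?_
  rw [gaussPDF_sqrt hx, chi1]
  rw [Real.sqrt_mul (by positivity) x]
  field_simp




lemma rhoN_nonneg (n : ℕ) (x : ℝ) : 0 ≤ rhoN n x :=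
  mul_nonneg (mul_nonneg (Nat.cast_nonneg n) (pow_nonneg (Fc_nonneg 0 x) _)) (chi1_nonneg x)

lemma rhoN_measurable (n : ℕ) : Measurable (rhoN n) :=
  ((measurable_const.mul ((Fc_measurable 0).pow_const _)).mul chi1_measurable)

lemma chi1_le {t : ℝ} (ht : 0 < t) : chi1 t ≤ t ^ (-(1/2) : ℝ) := by
  have hst : (0:ℝ) < Real.sqrt t := Real.sqrt_pos.2 ht
  have h1 : Real.sqrt t ≤ Real.sqrt (2 * Real.pi * t) := by
    apply Real.sqrt_le_sqrt; nlinarith [Real.pi_gt_three]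
  have h2 : chi1 t ≤ 1 / Real.sqrt t := by
    rw [chi1, div_le_div_iff₀ (lt_of_lt_of_le hst h1) hst, one_mul]
    calc Real.exp (-t/2) * Real.sqrt t ≤ 1 * Real.sqrt t := by
          gcongr
          exact Real.exp_le_one_iff.2 (by linarith)
      _ ≤ Real.sqrt (2 * Real.pi * t) := by rw [one_mul]; exact h1
  calc chi1 t ≤ 1 / Real.sqrt t := h2
    _ = t ^ (-(1/2) : ℝ) := by
        rw [Real.rpow_neg ht.le, Real.sqrt_eq_rpow, one_div]

lemma integrableOn_rhoN (n : ℕ) {b : ℝ} (hb : 0 ≤ b) :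
    IntegrableOn (rhoN n) (Set.Ioc 0 b) := by
  have hdom : IntegrableOn (fun t : ℝ => (n : ℝ) * t ^ (-(1/2) : ℝ)) (Set.Ioc 0 b) := by
    have := (intervalIntegral.intervalIntegrable_rpow' (a := 0) (b := b)
      (r := -(1/2)) (by norm_num)).const_mul (n : ℝ)
    rwa [intervalIntegrable_iff_integrableOn_Ioc_of_le hb] at this
  refine Integrable.mono hdom (rhoN_measurable n).aestronglyMeasurable ?_
  rw [ae_restrict_iff' measurableSet_Ioc]
  filter_upwards with t ht
  rw [Real.norm_eq_abs, Real.norm_eq_abs, abs_of_nonneg (rhoN_nonneg n t)]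
  have h1 : chi1 t ≤ t ^ (-(1/2) : ℝ) := chi1_le ht.1
  have h2 : Fc 0 t ^ (n - 1) ≤ 1 := pow_le_one₀ (Fc_nonneg 0 t) (Fc_le_one 0 t)
  calc rhoN n t ≤ (n : ℝ) * 1 * chi1 t := by
        unfold rhoN
        have := chi1_nonneg t
        have h0 : (0:ℝ) ≤ (n:ℝ) := Nat.cast_nonneg n
        exact mul_le_mul_of_nonneg_right (mul_le_mul_of_nonneg_left h2 h0) this
    _ ≤ (n : ℝ) * t ^ (-(1/2) : ℝ) := by
        rw [mul_one]
        exact mul_le_mul_of_nonneg_left h1 (Nat.cast_nonneg n)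
    _ ≤ |(n : ℝ) * t ^ (-(1/2) : ℝ)| := le_abs_self _

lemma ftc_rhoN {n : ℕ} (hn : 1 ≤ n) {b : ℝ} (hb : 0 ≤ b) :
    (∫ t in Set.Ioc 0 b, rhoN n t) = Fc 0 b ^ n := by
  have key : (∫ t in (0:ℝ)..b, rhoN n t) = Fc 0 b ^ n - Fc 0 0 ^ n := by
    refine intervalIntegral.integral_eq_sub_of_hasDeriv_right_of_le (f := fun t => Fc 0 t ^ n) (f' := rhoN n) hb ?_ ?_ ?_
    · exact (continuousOn_Fc0.mono Icc_subset_Ici_self).pow n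
    · intro x hx
      exact (((hasDerivAt_Fc0 hx.1).pow n).hasDerivWithinAt)
    · rw [intervalIntegrable_iff_integrableOn_Ioc_of_le hb]
      exact integrableOn_rhoN n hb
  rw [← intervalIntegral.integral_of_le hb, key, Fc0_zero, zero_pow (by omega), sub_zero]




lemma measurable_supsq {ι : Type*} [Fintype ι] (h : (Finset.univ : Finset ι).Nonempty) :
    Measurable (fun y : ι → ℝ => Finset.univ.sup' h (fun i => y i ^ 2)) := by
  have : (fun y : ι → ℝ => Finset.univ.sup' h (fun i => y i ^ 2))
      = Finset.univ.sup' h (fun i => fun y : ι → ℝ => y i ^ 2) := by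
    funext y
    rw [Finset.sup'_apply]
  rw [this]
  exact Finset.measurable_sup' h (fun i _ => (measurable_pi_apply i).pow_const 2)

lemma map_supsq {ι : Type*} [Fintype ι] (h : (Finset.univ : Finset ι).Nonempty)
    (hcard : 1 ≤ Fintype.card ι) :
    Measure.map (fun y : ι → ℝ => Finset.univ.sup' h (fun i => y i ^ 2))
      (Measure.pi fun _ : ι => gaussianReal 0 1)
    = (volume.restrict (Set.Ioi (0:ℝ))).withDensity
        (fun x => ENNReal.ofReal (rhoN (Fintype.card ι) x)) := by
  set n := Fintype.card ι
  refine Measure.ext_of_Iic _ _ (fun b => ?_)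
  have hW := measurable_supsq h
  rw [Measure.map_apply hW measurableSet_Iic]
  have hpre : (fun y : ι → ℝ => Finset.univ.sup' h (fun i => y i ^ 2)) ⁻¹' (Iic b)
      = Set.pi Set.univ (fun _ : ι => {t : ℝ | t ^ 2 ≤ b}) := by
    ext y
    simp [Finset.sup'_le_iff]
  have heq : gaussianReal 0 1 {t : ℝ | t ^ 2 ≤ b} = ENNReal.ofReal (Fc 0 b) :=
    (ENNReal.ofReal_toReal (measure_ne_top _ _)).symm
  rw [hpre, Measure.pi_pi, Finset.prod_const, heq, Finset.card_univ,
    ← ENNReal.ofReal_pow (Fc_nonneg 0 b)]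
  rw [withDensity_apply _ measurableSet_Iic, Measure.restrict_restrict measurableSet_Iic,
    Set.Iic_inter_Ioi]
  rcases le_or_gt 0 b with hb | hb
  · rw [← ofReal_integral_eq_lintegral_ofReal
      ((integrableOn_rhoN n hb).mono_set (by intro t ht; exact ⟨ht.1, ht.2⟩))
      (ae_of_all _ (fun t => rhoN_nonneg n t)), ftc_rhoN hcard hb]
  · have h1 : Set.Ioc (0:ℝ) b = ∅ := Set.Ioc_eq_empty (by linarith)
    rw [h1, Fc_neg hb, zero_pow (by omega)]
    simp




theorem statement1 (pt pu q : ℕ) (hpt : 1 ≤ pt) (hpu : 1 ≤ pu) (hq : 1 ≤ q)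
    (ω : Fin pt → Fin q → ℝ) :
    ((Measure.pi fun x : (Fin pt ⊕ Fin pu) × Fin q =>
        gaussianReal (Sum.elim (fun i => ω i x.2) (fun _ => 0) x.1) 1)
      {T : (Fin pt ⊕ Fin pu) × Fin q → ℝ |
        (Finset.univ : Finset (Fin pu × Fin q)).sup'
            ⟨(⟨0, hpu⟩, ⟨0, hq⟩), Finset.mem_univ _⟩
            (fun ij => T (Sum.inr ij.1, ij.2) ^ 2) <
          (Finset.univ : Finset (Fin pt × Fin q)).sup'
            ⟨(⟨0, hpt⟩, ⟨0, hq⟩), Finset.mem_univ _⟩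
            (fun ij => T (Sum.inl ij.1, ij.2) ^ 2)}).toReal =
      ∫ x in Set.Ioi (0 : ℝ),
        (pu * q : ℝ) *
          ((gaussianReal 0 1 {y : ℝ | y ^ 2 ≤ x}).toReal) ^ (pu * q - 1) *
          (Real.exp (-x / 2) / Real.sqrt (2 * Real.pi * x)) *
          (1 - ∏ i : Fin pt, ∏ j : Fin q,
            (gaussianReal (ω i j) 1 {y : ℝ | y ^ 2 ≤ x}).toReal) := by
  classical
  set ι := (Fin pt ⊕ Fin pu) × Fin q
  set c : ι → ℝ := fun x => Sum.elim (fun i => ω i x.2) (fun _ => 0) x.1 with hc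
  set hl : (Finset.univ : Finset (Fin pt × Fin q)).Nonempty :=
    ⟨(⟨0, hpt⟩, ⟨0, hq⟩), Finset.mem_univ _⟩
  set hr : (Finset.univ : Finset (Fin pu × Fin q)).Nonempty :=
    ⟨(⟨0, hpu⟩, ⟨0, hq⟩), Finset.mem_univ _⟩
  set M : ((Fin pt × Fin q) → ℝ) → ℝ :=
    fun x => Finset.univ.sup' hl (fun ij => x ij ^ 2) with hM
  set W : ((Fin pu × Fin q) → ℝ) → ℝ :=
    fun y => Finset.univ.sup' hr (fun ij => y ij ^ 2) with hW
  set μl : Measure ((Fin pt × Fin q) → ℝ) :=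
    Measure.pi fun ij => gaussianReal (ω ij.1 ij.2) 1 with hμl
  set μr : Measure ((Fin pu × Fin q) → ℝ) :=
    Measure.pi fun _ => gaussianReal 0 1 with hμr
  set n : ℕ := Fintype.card (Fin pu × Fin q) with hn
  have hn' : n = pu * q := by simp [hn]
  have hn1 : 1 ≤ n := by rw [hn']; exact Nat.one_le_iff_ne_zero.2 (by positivity)
  set e0 : (Fin pt × Fin q) ⊕ (Fin pu × Fin q) ≃ ι :=
    (Equiv.sumProdDistrib (Fin pt) (Fin pu) (Fin q)).symm with he0
  -- measure preserving maps
  have MP1 := MeasureTheory.measurePreserving_piCongrLeft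
    (fun x : ι => gaussianReal (c x) 1) e0
  have MP2 := MeasureTheory.measurePreserving_sumPiEquivProdPi_symm
    (fun k : (Fin pt × Fin q) ⊕ (Fin pu × Fin q) => gaussianReal (c (e0 k)) 1)
  have hml : (fun ij : Fin pt × Fin q => gaussianReal (c (e0 (Sum.inl ij))) 1)
      = fun ij => gaussianReal (ω ij.1 ij.2) 1 := rfl
  have hmr : (fun ij : Fin pu × Fin q => gaussianReal (c (e0 (Sum.inr ij))) 1)
      = fun _ => gaussianReal 0 1 := rfl
  rw [hml, hmr] at MP2
  have MP := MP1.comp MP2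
  -- the event
  set A : Set (ι → ℝ) := {T : ι → ℝ |
      Finset.univ.sup' hr (fun ij : Fin pu × Fin q => T (Sum.inr ij.1, ij.2) ^ 2) <
      Finset.univ.sup' hl (fun ij : Fin pt × Fin q => T (Sum.inl ij.1, ij.2) ^ 2)} with hA
  have hMmeas : Measurable M := measurable_supsq hl
  have hWmeas : Measurable W := measurable_supsq hr
  have hAmeas : MeasurableSet A := by
    apply measurableSet_lt
    · exact hWmeas.comp (measurable_pi_lambda _
        (fun ij => measurable_pi_apply (Sum.inr ij.1, ij.2)))
    · exact hMmeas.comp (measurable_pi_lambda _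
        (fun ij => measurable_pi_apply (Sum.inl ij.1, ij.2)))
  set S : Set (((Fin pt × Fin q) → ℝ) × ((Fin pu × Fin q) → ℝ)) :=
    {p | W p.2 < M p.1} with hS
  have hSmeas : MeasurableSet S :=
    measurableSet_lt (hWmeas.comp measurable_snd) (hMmeas.comp measurable_fst)
  -- the preimage of A is S
  have hpre : (⇑(MeasurableEquiv.piCongrLeft (fun _ : ι => ℝ) e0) ∘
      ⇑(MeasurableEquiv.sumPiEquivProdPi
        (fun _ : (Fin pt × Fin q) ⊕ (Fin pu × Fin q) => ℝ)).symm) ⁻¹' A = S := by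
    ext ⟨x, y⟩
    have hTl : ∀ ij : Fin pt × Fin q,
        (MeasurableEquiv.piCongrLeft (fun _ : ι => ℝ) e0)
          ((MeasurableEquiv.sumPiEquivProdPi
            (fun _ : (Fin pt × Fin q) ⊕ (Fin pu × Fin q) => ℝ)).symm (x, y))
          (Sum.inl ij.1, ij.2) = x ij := by
      intro ij
      have h1 := Equiv.piCongrLeft_sumInl (fun _ : ι => ℝ) e0 x y ij
      have h2 : e0 (Sum.inl ij) = (Sum.inl ij.1, ij.2) := rfl
      rw [h2] at h1
      exact h1
    have hTr : ∀ ij : Fin pu × Fin q,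
        (MeasurableEquiv.piCongrLeft (fun _ : ι => ℝ) e0)
          ((MeasurableEquiv.sumPiEquivProdPi
            (fun _ : (Fin pt × Fin q) ⊕ (Fin pu × Fin q) => ℝ)).symm (x, y))
          (Sum.inr ij.1, ij.2) = y ij := by
      intro ij
      have h1 := Equiv.piCongrLeft_sumInr (fun _ : ι => ℝ) e0 x y ij
      have h2 : e0 (Sum.inr ij) = (Sum.inr ij.1, ij.2) := rfl
      rw [h2] at h1
      exact h1
    simp only [Set.mem_preimage, Function.comp_apply, hA, Set.mem_setOf_eq, hS, hM, hW]
    constructor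
    · intro hlt
      refine lt_of_le_of_lt (le_of_eq ?_) (lt_of_lt_of_le hlt (le_of_eq ?_))
      · exact (Finset.sup'_congr hr rfl (fun ij _ => by rw [hTr ij])).symm
      · exact Finset.sup'_congr hl rfl (fun ij _ => by rw [hTl ij])
    · intro hlt
      refine lt_of_le_of_lt (le_of_eq ?_) (lt_of_lt_of_le hlt (le_of_eq ?_))
      · exact Finset.sup'_congr hr rfl (fun ij _ => by rw [hTr ij])
      · exact (Finset.sup'_congr hl rfl (fun ij _ => by rw [hTl ij])).symm
  have step1 : (Measure.pi fun x : ι => gaussianReal (c x) 1) A = (μl.prod μr) S := by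
    rw [← MP.measure_preimage hAmeas.nullMeasurableSet, hpre]
  -- the conditional probability function
  set kk : ℝ → ENNReal := fun w =>
    1 - ∏ ij : Fin pt × Fin q, ENNReal.ofReal (Fc (ω ij.1 ij.2) w) with hkk
  have hkkmeas : Measurable kk := by
    apply Measurable.const_sub
    exact Finset.measurable_prod _
      (fun ij _ => ENNReal.measurable_ofReal.comp (Fc_measurable _))
  have step2 : (μl.prod μr) S = ∫⁻ y, kk (W y) ∂μr := by
    rw [Measure.prod_apply_symm hSmeas]
    refine lintegral_congr (fun y => ?_)
    have hpre2 : ((fun x => (x, y)) ⁻¹' S) = {x | M x ≤ W y}ᶜ := by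
      ext x
      simp [hS, not_le]
    rw [hpre2, measure_compl (measurableSet_le hMmeas measurable_const)
      (measure_ne_top _ _), measure_univ]
    congr 1
    have hpi : {x : (Fin pt × Fin q) → ℝ | M x ≤ W y}
        = Set.pi Set.univ (fun _ : Fin pt × Fin q => {t : ℝ | t ^ 2 ≤ W y}) := by
      ext x
      simp [hM, Finset.sup'_le_iff]
    rw [hpi, hμl, Measure.pi_pi]
    exact Finset.prod_congr rfl
      (fun ij _ => (ENNReal.ofReal_toReal (measure_ne_top _ _)).symm)
  have step3 : (∫⁻ y, kk (W y) ∂μr) = ∫⁻ w, kk w ∂(Measure.map W μr) :=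
    (lintegral_map hkkmeas hWmeas).symm
  have step4 : (∫⁻ w, kk w ∂(Measure.map W μr))
      = ∫⁻ x in Set.Ioi (0:ℝ), ENNReal.ofReal (rhoN n x) * kk x := by
    rw [hW, hμr, map_supsq hr hn1, ← hn,
      lintegral_withDensity_eq_lintegral_mul _
        ((rhoN_measurable n).ennreal_ofReal) hkkmeas]
    rfl
  -- the right-hand side
  set P : ℝ → ℝ := fun x => ∏ ij : Fin pt × Fin q, Fc (ω ij.1 ij.2) x with hP
  have hPmeas : Measurable P :=
    Finset.measurable_prod _ (fun ij _ => Fc_measurable _)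
  have hPnonneg : ∀ x, 0 ≤ P x :=
    fun x => Finset.prod_nonneg (fun ij _ => Fc_nonneg _ _)
  have hPle1 : ∀ x, P x ≤ 1 :=
    fun x => Finset.prod_le_one (fun ij _ => Fc_nonneg _ _) (fun ij _ => Fc_le_one _ _)
  have hRHS : (∫ x in Set.Ioi (0 : ℝ),
        (pu * q : ℝ) *
          ((gaussianReal 0 1 {y : ℝ | y ^ 2 ≤ x}).toReal) ^ (pu * q - 1) *
          (Real.exp (-x / 2) / Real.sqrt (2 * Real.pi * x)) *
          (1 - ∏ i : Fin pt, ∏ j : Fin q,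
            (gaussianReal (ω i j) 1 {y : ℝ | y ^ 2 ≤ x}).toReal))
      = ∫ x in Set.Ioi (0:ℝ), rhoN n x * (1 - P x) := by
    refine integral_congr_ae (ae_of_all _ (fun x => ?_))
    show (pu * q : ℝ) * Fc 0 x ^ (pu * q - 1) * chi1 x * (1 - ∏ i : Fin pt, ∏ j : Fin q,
      Fc (ω i j) x) = rhoN n x * (1 - P x)
    have hpp : (∏ i : Fin pt, ∏ j : Fin q, Fc (ω i j) x)
        = ∏ ij : Fin pt × Fin q, Fc (ω ij.1 ij.2) x := (Fintype.prod_prod_type (fun ij : Fin pt × Fin q => Fc (ω ij.1 ij.2) x)).symm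
    rw [rhoN, hP, hn', hpp]
    push_cast
    ring
  have hg_nonneg : ∀ x, 0 ≤ rhoN n x * (1 - P x) :=
    fun x => mul_nonneg (rhoN_nonneg n x) (by linarith [hPle1 x])
  have hg_meas : Measurable (fun x => rhoN n x * (1 - P x)) :=
    (rhoN_measurable n).mul (measurable_const.sub hPmeas)
  have hlint : (∫ x in Set.Ioi (0:ℝ), rhoN n x * (1 - P x))
      = (∫⁻ x in Set.Ioi (0:ℝ), ENNReal.ofReal (rhoN n x * (1 - P x))).toReal := by
    rw [integral_eq_lintegral_of_nonneg_ae (ae_of_all _ hg_nonneg)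
      hg_meas.aestronglyMeasurable]
  have hptwise : ∀ x, ENNReal.ofReal (rhoN n x * (1 - P x))
      = ENNReal.ofReal (rhoN n x) * kk x := by
    intro x
    rw [ENNReal.ofReal_mul (rhoN_nonneg n x)]
    congr 1
    rw [hkk]
    rw [ENNReal.ofReal_sub 1 (hPnonneg x), ENNReal.ofReal_one, hP,
      ENNReal.ofReal_prod_of_nonneg (fun ij _ => Fc_nonneg _ _)]
  rw [hRHS, hlint]
  rw [step1, step2, step3, step4]
  congr 1
  exact lintegral_congr (fun x => (hptwise x).symm)
end

section
/- For real numbers $0 \leq c \leq c'$ and every $x \geq 0$, letting $\nu_c$ denote the real Gaussian measure with mean $c$ and variance $1$, one has $\nu_{c'}\{y \in \mathbb{R} : y^2 \leq x\} \leq \nu_{c}\{y \in \mathbb{R} : y^2 \leq x\}$; that is, the cumulative distribution function of the noncentral chi-squared distribution with one degree of freedom is nonincreasing in the noncentrality parameter. -/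
open MeasureTheory ProbabilityTheory

theorem statement8 (c c' : ℝ) (hc : 0 ≤ c) (hcc' : c ≤ c') (x : ℝ) (hx : 0 ≤ x) :
    gaussianReal c' 1 {y : ℝ | y ^ 2 ≤ x} ≤ gaussianReal c 1 {y : ℝ | y ^ 2 ≤ x} := by
  set a := Real.sqrt x with ha_def
  have ha : 0 ≤ a := Real.sqrt_nonneg x
  have hset : {y : ℝ | y ^ 2 ≤ x} = Set.Icc (-a) a := by
    ext y
    simp only [Set.mem_setOf_eq, Set.mem_Icc, ← abs_le]
    constructor
    · intro h
      rw [← Real.sqrt_sq_eq_abs]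
      exact Real.sqrt_le_sqrt h
    · intro h
      calc y ^ 2 = |y| ^ 2 := (sq_abs y).symm
        _ ≤ a ^ 2 := by nlinarith [abs_nonneg y]
        _ = x := Real.sq_sqrt hx
  set φ : ℝ → ℝ := gaussianPDFReal 0 1 with hφ_def
  have hφc : Continuous φ := by
    unfold φ
    rw [gaussianPDFReal_def]
    continuity
  set G : ℝ → ℝ := fun b => ∫ u in (-a - b)..(a - b), φ u with hG_def
  -- measure equals G
  have hmeas : ∀ b : ℝ, gaussianReal b 1 {y : ℝ | y ^ 2 ≤ x} = ENNReal.ofReal (G b) := by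
    intro b
    rw [hset, gaussianReal_apply_eq_integral b one_ne_zero]
    congr 1
    have hpdf : ∀ y : ℝ, gaussianPDFReal b 1 y = φ (y - b) := by
      intro y
      simp [hφ_def, gaussianPDFReal]
    rw [MeasureTheory.integral_Icc_eq_integral_Ioc,
      ← intervalIntegral.integral_of_le (by linarith : -a ≤ a)]
    simp_rw [hpdf]
    rw [intervalIntegral.integral_comp_sub_right φ b]
  -- G has derivative φ(-a-b) - φ(a-b)
  have hH : ∀ t : ℝ, HasDerivAt (fun u => ∫ s in (0:ℝ)..u, φ s) (φ t) t := fun t =>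
    (hφc.integral_hasStrictDerivAt 0 t).hasDerivAt
  have hGsplit : ∀ b : ℝ, G b = (∫ s in (0:ℝ)..(a - b), φ s) - ∫ s in (0:ℝ)..(-a - b), φ s := by
    intro b
    rw [intervalIntegral.integral_interval_sub_left (hφc.intervalIntegrable _ _)
      (hφc.intervalIntegrable _ _)]
  have hGderiv : ∀ b : ℝ, HasDerivAt G (φ (-a - b) - φ (a - b)) b := by
    intro b
    have h1 : HasDerivAt (fun b => ∫ s in (0:ℝ)..(a - b), φ s) (-φ (a - b)) b := by
      have := (hH (a - b)).comp b ((hasDerivAt_id b).const_sub a)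
      simpa [Function.comp_def] using this
    have h2 : HasDerivAt (fun b => ∫ s in (0:ℝ)..(-a - b), φ s) (-φ (-a - b)) b := by
      have := (hH (-a - b)).comp b ((hasDerivAt_id b).const_sub (-a))
      simpa [Function.comp_def] using this
    have := h1.sub h2
    have heq : (fun b => (∫ s in (0:ℝ)..(a - b), φ s) - ∫ s in (0:ℝ)..(-a - b), φ s) = G := by
      funext b; rw [hGsplit b]
    rw [show ((fun b => ∫ s in (0:ℝ)..(a - b), φ s) - fun b => ∫ s in (0:ℝ)..(-a - b), φ s) = G from heq] at this
    refine this.congr_deriv ?_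
    ring
  -- deriv nonpos on [0, ∞)
  have hant : AntitoneOn G (Set.Ici 0) := by
    apply antitoneOn_of_deriv_nonpos (convex_Ici 0)
    · exact fun b _ => ((hGderiv b).differentiableAt).continuousAt.continuousWithinAt
    · exact fun b _ => ((hGderiv b).differentiableAt).differentiableWithinAt
    · intro b hb
      rw [interior_Ici] at hb
      rw [(hGderiv b).deriv]
      have hb' : 0 ≤ b := le_of_lt hb
      have : φ (-a - b) ≤ φ (a - b) := by
        simp only [hφ_def, gaussianPDFReal]
        apply mul_le_mul_of_nonneg_left _ (by positivity)
        apply Real.exp_le_exp.mpr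
        have h1 : (-a - b - 0) ^ 2 = (a + b) ^ 2 := by ring
        have h2 : (a - b - 0) ^ 2 = (a - b) ^ 2 := by ring
        rw [h1, h2]
        have : (a - b) ^ 2 ≤ (a + b) ^ 2 := by nlinarith
        push_cast
        nlinarith
      linarith
  rw [hmeas c, hmeas c']
  exact ENNReal.ofReal_le_ofReal (hant (Set.mem_Ici.mpr hc) (Set.mem_Ici.mpr (hc.trans hcc')) hcc')
end
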